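/- Let n ≥ 2 and define the Poisson kernel of the half space by P(y', s) = Γ(n/2) π^{−n/2} s (|y'|² + s²)^{−n/2} for y' ∈ ℝⁿ⁻¹ and s > 0. There exists a constant C > 0 depending only on n such that for every bounded continuous g : ℝⁿ⁻¹ → ℝ, every s > 0 and every j ∈ {1, …, n−1}, the function u(x') = ∫_{ℝⁿ⁻¹} P(x'−y', s) g(y') dy' has a partial derivative ∂u/∂xⱼ at every point x' ∈ ℝⁿ⁻¹, and |∂u/∂xⱼ(x')| ≤ (C/s) sup_{ℝⁿ⁻¹} |g|. -/

import Mathlib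

open MeasureTheory Set Metric Filter

noncomputable section

abbrev En (n : ℕ) := EuclideanSpace ℝ (Fin n)

/-- the `i`-th standard basis vector of `ℝⁿ`. -/
def eb (n : ℕ) (i : Fin n) : En n := EuclideanSpace.single i 1

/-- the Laplacian `Δf`, computed as the sum of the second derivatives in the
coordinate directions. -/
def vlap {n : ℕ} {F : Type*} [NormedAddCommGroup F] [NormedSpace ℝ F]
    (f : En n → F) (x : En n) : F :=
  ∑ i, fderiv ℝ (fun y => fderiv ℝ f y (eb n i)) x (eb n i)

/-- the divergence `div v = Σⱼ ∂vʲ/∂xⱼ` of a vector field. -/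
def vdiv {n : ℕ} (v : En n → En n) (x : En n) : ℝ :=
  ∑ i, fderiv ℝ v x (eb n i) i

/-- the index of the last coordinate of `ℝⁿ`. -/
def lastIdx (n : ℕ) (hn : 2 ≤ n) : Fin n := ⟨n - 1, by omega⟩

/-- the last coordinate `xₙ` of a point of `ℝⁿ`. -/
def xlast (n : ℕ) (hn : 2 ≤ n) (x : En n) : ℝ := x (lastIdx n hn)

/-- the open upper half space `ℝⁿ₊ = {x : xₙ > 0}`. -/
def openHalf (n : ℕ) (hn : 2 ≤ n) : Set (En n) := {x : En n | 0 < xlast n hn x}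

/-- the closed upper half space `{x : xₙ ≥ 0}`. -/
def closedHalf (n : ℕ) (hn : 2 ≤ n) : Set (En n) := {x : En n | 0 ≤ xlast n hn x}

/-- the Poisson kernel of the half space,
`P(y', s) = Γ(n/2) π^{−n/2} s (|y'|² + s²)^{−n/2}`. -/
def poissonK (n : ℕ) (y : En (n - 1)) (s : ℝ) : ℝ :=
  Real.Gamma ((n : ℝ) / 2) * Real.pi ^ (-(n : ℝ) / 2) * s *
    (‖y‖ ^ 2 + s ^ 2) ^ (-(n : ℝ) / 2)

section Aux

variable {m : ℕ}

lemma pointwise_scale (p s : ℝ) (hs : 0 < s) (y : En m) :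
    (‖y‖ ^ 2 + s ^ 2) ^ (-p) = ((s ^ 2 : ℝ) ^ p)⁻¹ * ((1 : ℝ) + ‖s⁻¹ • y‖ ^ 2) ^ (-p) := by
  have hs2 : (0 : ℝ) < s ^ 2 := by positivity
  have h1 : ‖s⁻¹ • y‖ ^ 2 = (s ^ 2)⁻¹ * ‖y‖ ^ 2 := by
    rw [norm_smul, Real.norm_eq_abs, abs_of_pos (inv_pos.2 hs), mul_pow, inv_pow]
  have h2 : (1 : ℝ) + ‖s⁻¹ • y‖ ^ 2 = (s ^ 2)⁻¹ * (‖y‖ ^ 2 + s ^ 2) := by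
    rw [h1]; field_simp; ring
  rw [h2, Real.mul_rpow (by positivity) (by positivity), Real.inv_rpow hs2.le,
    Real.rpow_neg hs2.le, inv_inv, ← mul_assoc, inv_mul_cancel₀ (by positivity), one_mul]

lemma integrable_kernel (p s : ℝ) (hp : (m : ℝ) < 2 * p) (hs : 0 < s) :
    Integrable (fun y : En m => (‖y‖ ^ 2 + s ^ 2) ^ (-p)) := by
  have hI : Integrable (fun w : En m => ((1 : ℝ) + ‖w‖ ^ 2) ^ (-p)) := by
    have h := integrable_rpow_neg_one_add_norm_sq (E := En m) (μ := volume) (r := 2 * p)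
      (by rw [finrank_euclideanSpace_fin]; exact hp)
    have he : -(2 * p) / 2 = -p := by ring
    rwa [he] at h
  have h2 : Integrable (fun y : En m => ((1 : ℝ) + ‖s⁻¹ • y‖ ^ 2) ^ (-p)) :=
    (integrable_comp_smul_iff volume (fun w : En m => ((1 : ℝ) + ‖w‖ ^ 2) ^ (-p))
      (inv_ne_zero hs.ne')).2 hI
  exact (h2.const_mul _).congr
    (Eventually.of_forall fun y => (pointwise_scale p s hs y).symm)

lemma integral_kernel_eq (p s : ℝ) (hs : 0 < s) :
    ∫ y : En m, (‖y‖ ^ 2 + s ^ 2) ^ (-p) =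
      ((s ^ 2 : ℝ) ^ p)⁻¹ * s ^ m * ∫ w : En m, ((1 : ℝ) + ‖w‖ ^ 2) ^ (-p) := by
  simp_rw [pointwise_scale p s hs]
  rw [integral_const_mul,
    Measure.integral_comp_inv_smul_of_nonneg volume
      (fun w : En m => ((1 : ℝ) + ‖w‖ ^ 2) ^ (-p)) hs.le,
    finrank_euclideanSpace_fin, smul_eq_mul]
  ring

end Aux

set_option maxHeartbeats 1000000 in
/-- **Estimate (2.9)**: tangential-derivative `L^∞` estimate of the Poisson semigroup. -/
theorem poisson_tangential_derivative_sup_estimate (n : ℕ) (hn : 2 ≤ n) :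
    ∃ C > (0 : ℝ), ∀ g : En (n - 1) → ℝ, Continuous g →
      ∀ B : ℝ, (∀ y : En (n - 1), |g y| ≤ B) →
      ∀ s : ℝ, 0 < s → ∀ j : Fin (n - 1), ∀ x : En (n - 1),
        ∃ d : ℝ,
          HasDerivAt (fun r : ℝ =>
            ∫ y : En (n - 1), poissonK n (x + r • eb (n - 1) j - y) s * g y) d 0 ∧
          |d| ≤ C / s * B := by
  classical
  have hn0 : (0 : ℝ) < n := by exact_mod_cast (by omega : 0 < n)
  set p : ℝ := (n : ℝ) / 2 with hp
  have hppos : 0 < p := by rw [hp]; exact div_pos hn0 two_pos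
  set I : ℝ := ∫ w : En (n - 1), ((1 : ℝ) + ‖w‖ ^ 2) ^ (-p) with hI
  have hI0 : 0 ≤ I := integral_nonneg fun w => Real.rpow_nonneg (by positivity) _
  set c₀ : ℝ := Real.Gamma ((n : ℝ) / 2) * Real.pi ^ (-(n : ℝ) / 2) with hc₀
  have hc₀pos : 0 < c₀ := by
    rw [hc₀]
    exact mul_pos (Real.Gamma_pos_of_pos (div_pos hn0 two_pos))
      (Real.rpow_pos_of_pos Real.pi_pos _)
  have h4p : (0 : ℝ) ≤ (4 : ℝ) ^ p := Real.rpow_nonneg (by norm_num) p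
  have hCnn : 0 ≤ c₀ * n * 4 ^ p * I :=
    mul_nonneg (mul_nonneg (mul_nonneg hc₀pos.le (Nat.cast_nonneg n)) h4p) hI0
  refine ⟨c₀ * n * 4 ^ p * I + 1, by linarith, ?_⟩
  intro g hg B hB s hs j x
  have hB0 : 0 ≤ B := le_trans (abs_nonneg _) (hB 0)
  have he1 : ‖eb (n - 1) j‖ = 1 := by simp [eb, EuclideanSpace.norm_single]
  have hexp : -(n : ℝ) / 2 = -p := by rw [hp]; ring
  have hp2 : ((n - 1 : ℕ) : ℝ) < 2 * p := by
    rw [hp]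
    have hc : ((n - 1 : ℕ) : ℝ) = (n : ℝ) - 1 := by
      rw [Nat.cast_sub (by omega : 1 ≤ n)]; norm_num
    rw [hc]; linarith
  -- continuity of the kernel
  have hcont : ∀ r : ℝ,
      Continuous fun y : En (n - 1) => poissonK n (x + r • eb (n - 1) j - y) s := by
    intro r
    simp only [poissonK]
    refine continuous_const.mul ?_
    refine Continuous.rpow_const ?_ fun y => Or.inl (by positivity)
    exact ((continuous_const.sub continuous_id).norm.pow 2).add continuous_const
  -- the candidate derivative integrand
  set F' : ℝ → En (n - 1) → ℝ := fun r y =>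
    c₀ * s * (-(n : ℝ) / 2 * (‖x + r • eb (n - 1) j - y‖ ^ 2 + s ^ 2) ^ (-(n : ℝ) / 2 - 1) *
      (2 * (inner ℝ (x + r • eb (n - 1) j - y) (eb (n - 1) j) : ℝ))) * g y with hF'
  set bound : En (n - 1) → ℝ := fun y =>
    c₀ * (n : ℝ) * B * 4 ^ p * ((‖x - y‖ ^ 2 + s ^ 2) ^ (-p)) with hbound
  -- key bound
  have key : ∀ r : ℝ, |r| < s / 2 → ∀ y : En (n - 1), ‖F' r y‖ ≤ bound y := by
    intro r hr y
    set w : En (n - 1) := x + r • eb (n - 1) j - y with hw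
    have hq : (0 : ℝ) < ‖w‖ ^ 2 + s ^ 2 := by positivity
    have hQpos : (0 : ℝ) < (‖w‖ ^ 2 + s ^ 2) ^ (-(n : ℝ) / 2 - 1) := Real.rpow_pos_of_pos hq _
    have hlow : ‖x - y‖ - s / 2 ≤ ‖w‖ := by
      have h1 : ‖x - y‖ - ‖-(r • eb (n - 1) j)‖ ≤ ‖x - y - -(r • eb (n - 1) j)‖ :=
        norm_sub_norm_le _ _
      have h2 : x - y - -(r • eb (n - 1) j) = w := by rw [hw]; abel
      have h3 : ‖-(r • eb (n - 1) j)‖ = |r| := by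
        rw [norm_neg, norm_smul, he1, Real.norm_eq_abs, mul_one]
      rw [h2, h3] at h1
      linarith
    have hq4 : (‖x - y‖ ^ 2 + s ^ 2) / 4 ≤ ‖w‖ ^ 2 + s ^ 2 := by
      rcases le_or_gt ‖x - y‖ s with ht | ht
      · nlinarith [norm_nonneg w, norm_nonneg (x - y)]
      · have h1 : (0 : ℝ) ≤ ‖x - y‖ - s / 2 := by linarith
        have h2 : (‖x - y‖ - s / 2) ^ 2 ≤ ‖w‖ ^ 2 := pow_le_pow_left₀ h1 hlow 2
        nlinarith [norm_nonneg (x - y), sq_nonneg (‖x - y‖ - s)]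
    have hrpow : (‖w‖ ^ 2 + s ^ 2) ^ (-p) ≤ (4 : ℝ) ^ p * (‖x - y‖ ^ 2 + s ^ 2) ^ (-p) := by
      have h1 : (‖w‖ ^ 2 + s ^ 2) ^ (-p) ≤ ((‖x - y‖ ^ 2 + s ^ 2) / 4) ^ (-p) :=
        Real.rpow_le_rpow_of_nonpos (by positivity) hq4 (by linarith)
      have h2 : ((‖x - y‖ ^ 2 + s ^ 2) / 4) ^ (-p) =
          (4 : ℝ) ^ p * (‖x - y‖ ^ 2 + s ^ 2) ^ (-p) := by
        rw [Real.div_rpow (by positivity) (by norm_num),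
          Real.rpow_neg (by norm_num : (0 : ℝ) ≤ 4)]
        field_simp
      rw [h2] at h1
      exact h1
    have hinner : |(inner ℝ w (eb (n - 1) j) : ℝ)| ≤ ‖w‖ := by
      calc |(inner ℝ w (eb (n - 1) j) : ℝ)| ≤ ‖w‖ * ‖eb (n - 1) j‖ := abs_real_inner_le_norm _ _
        _ = ‖w‖ := by rw [he1, mul_one]
    have habs : ‖F' r y‖ =
        c₀ * s * ((n : ℝ) / 2 * (‖w‖ ^ 2 + s ^ 2) ^ (-(n : ℝ) / 2 - 1) *
          (2 * |(inner ℝ w (eb (n - 1) j) : ℝ)|)) * |g y| := by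
      rw [hF']
      simp only [← hw, Real.norm_eq_abs, abs_mul, abs_div, abs_neg, Nat.abs_cast,
        abs_two, abs_of_pos hQpos, abs_of_pos hc₀pos, abs_of_pos hs]
    have hA : (0 : ℝ) ≤ c₀ * (n : ℝ) * s * (‖w‖ ^ 2 + s ^ 2) ^ (-(n : ℝ) / 2 - 1) :=
      mul_nonneg (mul_nonneg (mul_nonneg hc₀pos.le (Nat.cast_nonneg n)) hs.le) hQpos.le
    have hcb : (0 : ℝ) ≤ c₀ * (n : ℝ) * B :=
      mul_nonneg (mul_nonneg hc₀pos.le (Nat.cast_nonneg n)) hB0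
    have step1 : ‖F' r y‖ ≤
        c₀ * (n : ℝ) * B * ((‖w‖ ^ 2 + s ^ 2) ^ (-(n : ℝ) / 2 - 1) * (s * ‖w‖)) := by
      rw [habs]
      calc c₀ * s * ((n : ℝ) / 2 * (‖w‖ ^ 2 + s ^ 2) ^ (-(n : ℝ) / 2 - 1) *
            (2 * |(inner ℝ w (eb (n - 1) j) : ℝ)|)) * |g y|
          = c₀ * (n : ℝ) * s * (‖w‖ ^ 2 + s ^ 2) ^ (-(n : ℝ) / 2 - 1) *
            |(inner ℝ w (eb (n - 1) j) : ℝ)| * |g y| := by ring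
        _ ≤ c₀ * (n : ℝ) * s * (‖w‖ ^ 2 + s ^ 2) ^ (-(n : ℝ) / 2 - 1) * ‖w‖ * |g y| :=
            mul_le_mul_of_nonneg_right (mul_le_mul_of_nonneg_left hinner hA) (abs_nonneg _)
        _ ≤ c₀ * (n : ℝ) * s * (‖w‖ ^ 2 + s ^ 2) ^ (-(n : ℝ) / 2 - 1) * ‖w‖ * B :=
            mul_le_mul_of_nonneg_left (hB y) (mul_nonneg hA (norm_nonneg _))
        _ = c₀ * (n : ℝ) * B * ((‖w‖ ^ 2 + s ^ 2) ^ (-(n : ℝ) / 2 - 1) * (s * ‖w‖)) := by ring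
    have hsw : s * ‖w‖ ≤ ‖w‖ ^ 2 + s ^ 2 := by linarith [sq_nonneg (‖w‖ - s), sq_nonneg ‖w‖, sq_nonneg s]
    have step2 : c₀ * (n : ℝ) * B * ((‖w‖ ^ 2 + s ^ 2) ^ (-(n : ℝ) / 2 - 1) * (s * ‖w‖)) ≤
        c₀ * (n : ℝ) * B * ((‖w‖ ^ 2 + s ^ 2) ^ (-p)) := by
      refine mul_le_mul_of_nonneg_left ?_ hcb
      have h2 : (‖w‖ ^ 2 + s ^ 2) ^ (-(n : ℝ) / 2 - 1) * (‖w‖ ^ 2 + s ^ 2) =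
          (‖w‖ ^ 2 + s ^ 2) ^ (-p) := by
        rw [show -p = -(n : ℝ) / 2 - 1 + 1 by rw [hp]; ring, Real.rpow_add_one hq.ne']
      calc (‖w‖ ^ 2 + s ^ 2) ^ (-(n : ℝ) / 2 - 1) * (s * ‖w‖) ≤
          (‖w‖ ^ 2 + s ^ 2) ^ (-(n : ℝ) / 2 - 1) * (‖w‖ ^ 2 + s ^ 2) :=
            mul_le_mul_of_nonneg_left hsw hQpos.le
        _ = (‖w‖ ^ 2 + s ^ 2) ^ (-p) := h2
    have step3 : c₀ * (n : ℝ) * B * ((‖w‖ ^ 2 + s ^ 2) ^ (-p)) ≤ bound y := by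
      rw [hbound]
      calc c₀ * (n : ℝ) * B * ((‖w‖ ^ 2 + s ^ 2) ^ (-p)) ≤
          c₀ * (n : ℝ) * B * ((4 : ℝ) ^ p * (‖x - y‖ ^ 2 + s ^ 2) ^ (-p)) :=
            mul_le_mul_of_nonneg_left hrpow hcb
        _ = c₀ * (n : ℝ) * B * 4 ^ p * ((‖x - y‖ ^ 2 + s ^ 2) ^ (-p)) := by ring
    linarith
  -- integrability facts
  have hker : Integrable (fun y : En (n - 1) => (‖y‖ ^ 2 + s ^ 2) ^ (-p)) :=
    integrable_kernel p s hp2 hs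
  have hbound_int : Integrable bound := by
    have h1 : Integrable (fun y : En (n - 1) => (‖x - y‖ ^ 2 + s ^ 2) ^ (-p)) :=
      hker.comp_sub_left x
    exact h1.const_mul _
  -- integrability of the function itself at r = 0
  have hFint : Integrable
      (fun y : En (n - 1) => poissonK n (x + (0 : ℝ) • eb (n - 1) j - y) s * g y) := by
    refine ((hker.comp_sub_left (x + (0 : ℝ) • eb (n - 1) j)).const_mul (c₀ * s * B)).mono'
      ((hcont 0).mul hg).aestronglyMeasurable (Eventually.of_forall fun y => ?_)
    have hq : (0 : ℝ) < ‖x + (0 : ℝ) • eb (n - 1) j - y‖ ^ 2 + s ^ 2 := by positivity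
    have hQ : (0 : ℝ) < (‖x + (0 : ℝ) • eb (n - 1) j - y‖ ^ 2 + s ^ 2) ^ (-p) :=
      Real.rpow_pos_of_pos hq _
    rw [Real.norm_eq_abs, abs_mul]
    simp only [poissonK]
    rw [← hc₀, hexp]
    rw [abs_of_pos (mul_pos (mul_pos hc₀pos hs) hQ)]
    calc c₀ * s * (‖x + (0 : ℝ) • eb (n - 1) j - y‖ ^ 2 + s ^ 2) ^ (-p) * |g y| ≤
        c₀ * s * (‖x + (0 : ℝ) • eb (n - 1) j - y‖ ^ 2 + s ^ 2) ^ (-p) * B :=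
          mul_le_mul_of_nonneg_left (hB y) (mul_nonneg (mul_nonneg hc₀pos.le hs.le) hQ.le)
      _ = c₀ * s * B * ((‖x + (0 : ℝ) • eb (n - 1) j - y‖ ^ 2 + s ^ 2) ^ (-p)) := by ring
  -- measurability of the derivative integrand
  have hF'meas : AEStronglyMeasurable (F' 0) (volume : Measure (En (n - 1))) := by
    have hvc : Continuous fun y : En (n - 1) => x + (0 : ℝ) • eb (n - 1) j - y :=
      continuous_const.sub continuous_id
    have h1 : Continuous fun y : En (n - 1) =>
        (‖x + (0 : ℝ) • eb (n - 1) j - y‖ ^ 2 + s ^ 2) ^ (-(n : ℝ) / 2 - 1) := by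
      refine Continuous.rpow_const ?_ fun y => Or.inl (by positivity)
      exact (hvc.norm.pow 2).add continuous_const
    have h2 : Continuous fun y : En (n - 1) =>
        (inner ℝ (x + (0 : ℝ) • eb (n - 1) j - y) (eb (n - 1) j) : ℝ) :=
      hvc.inner continuous_const
    have : Continuous (F' 0) := by
      rw [hF']
      exact ((continuous_const.mul ((continuous_const.mul h1).mul
        (continuous_const.mul h2))).mul hg)
    exact this.aestronglyMeasurable
  -- differentiability pointwise
  have hdiff : ∀ y : En (n - 1), ∀ r : ℝ,
      HasDerivAt (fun r : ℝ => poissonK n (x + r • eb (n - 1) j - y) s * g y) (F' r y) r := by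
    intro y r
    have hv : HasDerivAt (fun r : ℝ => x + r • eb (n - 1) j - y) (eb (n - 1) j) r := by
      simpa using (((hasDerivAt_id r).smul_const (eb (n - 1) j)).const_add x).sub_const y
    have hin : HasDerivAt (fun r : ℝ =>
        (inner ℝ (x + r • eb (n - 1) j - y) (x + r • eb (n - 1) j - y) : ℝ))
        ((inner ℝ (x + r • eb (n - 1) j - y) (eb (n - 1) j) : ℝ) +
          (inner ℝ (eb (n - 1) j) (x + r • eb (n - 1) j - y) : ℝ)) r := hv.inner ℝ hv
    have hqd : HasDerivAt (fun r : ℝ => ‖x + r • eb (n - 1) j - y‖ ^ 2 + s ^ 2)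
        (2 * (inner ℝ (x + r • eb (n - 1) j - y) (eb (n - 1) j) : ℝ)) r := by
      have h2 := hin.add_const (s ^ 2)
      have h3 : (fun r : ℝ =>
          (inner ℝ (x + r • eb (n - 1) j - y) (x + r • eb (n - 1) j - y) : ℝ) + s ^ 2) =
          fun r : ℝ => ‖x + r • eb (n - 1) j - y‖ ^ 2 + s ^ 2 := by
        funext r; rw [real_inner_self_eq_norm_sq]
      rw [h3] at h2
      refine h2.congr_deriv ?_
      rw [real_inner_comm]; ring
    have hq : (0 : ℝ) < ‖x + r • eb (n - 1) j - y‖ ^ 2 + s ^ 2 := by positivity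
    have hrp := (Real.hasDerivAt_rpow_const
      (p := -(n : ℝ) / 2) (Or.inl hq.ne')).comp r hqd
    have h4 : HasDerivAt (fun r : ℝ => (‖x + r • eb (n - 1) j - y‖ ^ 2 + s ^ 2) ^ (-(n : ℝ) / 2))
        (-(n : ℝ) / 2 * (‖x + r • eb (n - 1) j - y‖ ^ 2 + s ^ 2) ^ (-(n : ℝ) / 2 - 1) *
          (2 * (inner ℝ (x + r • eb (n - 1) j - y) (eb (n - 1) j) : ℝ))) r := by
      simpa [Function.comp_def] using hrp
    have h5 := (h4.const_mul (c₀ * s)).mul_const (g y)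
    have h6 : (fun r : ℝ => c₀ * s *
        (‖x + r • eb (n - 1) j - y‖ ^ 2 + s ^ 2) ^ (-(n : ℝ) / 2) * g y) =
        fun r : ℝ => poissonK n (x + r • eb (n - 1) j - y) s * g y := by
      funext r; rw [poissonK, ← hc₀]
    rw [h6] at h5
    exact h5
  -- the dominated differentiation theorem
  obtain ⟨-, hderiv⟩ := hasDerivAt_integral_of_dominated_loc_of_deriv_le
    (μ := (volume : Measure (En (n - 1)))) (x₀ := (0 : ℝ))
    (F := fun r y => poissonK n (x + r • eb (n - 1) j - y) s * g y) (F' := F')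
    (bound := bound) (Metric.ball_mem_nhds (0 : ℝ) (half_pos hs))
    (Eventually.of_forall fun r => ((hcont r).mul hg).aestronglyMeasurable)
    hFint hF'meas
    (Eventually.of_forall fun y r hr => key r (by simpa [Real.dist_eq] using hr) y)
    hbound_int
    (Eventually.of_forall fun y r _ => hdiff y r)
  refine ⟨∫ y, F' 0 y, hderiv, ?_⟩
  -- the final estimate
  have hd : |∫ y, F' 0 y| ≤ ∫ y, bound y := by
    rw [← Real.norm_eq_abs]
    exact norm_integral_le_of_norm_le hbound_int
      (Eventually.of_forall fun y => key 0 (by simpa using half_pos hs) y)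
  have htr : ∫ y : En (n - 1), (‖x - y‖ ^ 2 + s ^ 2) ^ (-p) =
      ∫ y : En (n - 1), (‖y‖ ^ 2 + s ^ 2) ^ (-p) :=
    integral_sub_left_eq_self (fun z : En (n - 1) => (‖z‖ ^ 2 + s ^ 2) ^ (-p)) volume x
  have h2p : (s ^ 2 : ℝ) ^ p = s ^ n := by
    calc (s ^ 2 : ℝ) ^ p = (s ^ ((2 : ℕ) : ℝ)) ^ p := by rw [Real.rpow_natCast]
      _ = s ^ (((2 : ℕ) : ℝ) * p) := (Real.rpow_mul hs.le _ _).symm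
      _ = s ^ ((n : ℕ) : ℝ) := by
          congr 1
          rw [hp]; push_cast; ring
      _ = s ^ n := Real.rpow_natCast s n
  have hsn : s ^ n = s ^ (n - 1) * s := by
    conv_lhs => rw [show n = n - 1 + 1 by omega]
    rw [pow_succ]
  have hval : ((s ^ 2 : ℝ) ^ p)⁻¹ * s ^ (n - 1) = s⁻¹ := by
    rw [h2p, hsn]
    have h0 : s ^ (n - 1) ≠ 0 := pow_ne_zero _ hs.ne'
    field_simp
  have hintval : ∫ y, bound y = c₀ * (n : ℝ) * B * 4 ^ p * (s⁻¹ * I) := by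
    rw [hbound, integral_const_mul, htr, integral_kernel_eq p s hs, ← hI, ← hval]
  calc |∫ y, F' 0 y| ≤ ∫ y, bound y := hd
    _ = c₀ * (n : ℝ) * B * 4 ^ p * (s⁻¹ * I) := hintval
    _ = c₀ * (n : ℝ) * 4 ^ p * I / s * B := by
        field_simp
    _ ≤ (c₀ * (n : ℝ) * 4 ^ p * I + 1) / s * B := by
        refine mul_le_mul_of_nonneg_right ?_ hB0
        exact (div_le_div_iff_of_pos_right hs).2 (by linarith)
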